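/- Let π : X → B be a map of sets, {U_j}_{j ∈ J} a family of subsets of B, f_j : π⁻¹(U_j) → S¹ maps, ε > 0 and 0 ≤ δ < 1. Suppose (Ω_{jk}) is a family of matrices in O(2), indexed by pairs (j,k) with U_j ∩ U_k ≠ ∅, such that ‖f_j(x) − Ω_{jk} f_k(x)‖ < ε for every x ∈ π⁻¹(U_j ∩ U_k); and suppose that for every triple (j,k,l) with U_j ∩ U_k ∩ U_l ≠ ∅, the Hausdorff distance (with respect to the Euclidean metric on ℝ²) between f_l(π⁻¹(U_j ∩ U_k ∩ U_l)) and S¹ is strictly less than δ. Then for every such triple (j,k,l), ‖Ω_{jk}·Ω_{kl} − Ω_{jl}‖_F < 3√2 · ε/(1−δ). -/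

import Mathlib

lemma aux_norm_map (Q : Matrix.orthogonalGroup (Fin 2) ℝ) (v : EuclideanSpace ℝ (Fin 2)) :
    ‖Matrix.toEuclideanCLM (𝕜 := ℝ) (Q : Matrix (Fin 2) (Fin 2) ℝ) v‖ = ‖v‖ := by
  refine ContinuousLinearMap.norm_map_of_mem_unitary ?_ v
  have hQ : (Q : Matrix (Fin 2) (Fin 2) ℝ) ∈ unitary (Matrix (Fin 2) (Fin 2) ℝ) := Q.2
  rw [Unitary.mem_iff] at hQ ⊢
  constructor
  · rw [← map_star, ← _root_.map_mul, hQ.1, map_one]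
  · rw [← map_star, ← _root_.map_mul, hQ.2, map_one]

lemma aux_apply (M : Matrix (Fin 2) (Fin 2) ℝ) (v : EuclideanSpace ℝ (Fin 2)) (i : Fin 2) :
    Matrix.toEuclideanCLM (𝕜 := ℝ) M v i = ∑ m, M i m * v m := rfl

lemma aux_coe (M : Matrix (Fin 2) (Fin 2) ℝ) (v : EuclideanSpace ℝ (Fin 2)) :
    Matrix.toEuclideanCLM (𝕜 := ℝ) M v = Matrix.toEuclideanLin M v := rfl

/-- The Frobenius norm of a real `2 × 2` matrix. -/
noncomputable def frobeniusNorm (A : Matrix (Fin 2) (Fin 2) ℝ) : ℝ :=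
  Real.sqrt (∑ i, ∑ j, (A i j) ^ 2)

/-- A witness `(Ω_{jk})` of a discrete `(ε, δ)`-approximate local
trivialization is a discrete `(3√2 ε / (1 − δ))`-approximate Čech 1-cocycle: on every
triple intersection, `‖Ω_{jk} Ω_{kl} − Ω_{jl}‖_F < 3√2 ε / (1 − δ)`. -/
theorem witness_is_approximate_cocycle {X B J : Type*} (π : X → B) (U : J → Set B)
    (f : J → X → EuclideanSpace ℝ (Fin 2)) (ε δ : ℝ) (hε : 0 < ε) (hδ0 : 0 ≤ δ)
    (hδ1 : δ < 1)
    (hsph : ∀ j, ∀ x ∈ π ⁻¹' (U j),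
      f j x ∈ Metric.sphere (0 : EuclideanSpace ℝ (Fin 2)) 1)
    (Ω : J → J → Matrix.orthogonalGroup (Fin 2) ℝ)
    (hΩ : ∀ j k, (U j ∩ U k).Nonempty → ∀ x ∈ π ⁻¹' (U j ∩ U k),
      ‖f j x - Matrix.toEuclideanLin ((Ω j k : Matrix (Fin 2) (Fin 2) ℝ)) (f k x)‖ < ε)
    (hH : ∀ j k l, (U j ∩ U k ∩ U l).Nonempty →
      EMetric.hausdorffEdist (f l '' (π ⁻¹' (U j ∩ U k ∩ U l)))
        (Metric.sphere (0 : EuclideanSpace ℝ (Fin 2)) 1) < ENNReal.ofReal δ) :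
    ∀ j k l, (U j ∩ U k ∩ U l).Nonempty →
      frobeniusNorm ((Ω j k : Matrix (Fin 2) (Fin 2) ℝ) * (Ω k l : Matrix (Fin 2) (Fin 2) ℝ)
          - (Ω j l : Matrix (Fin 2) (Fin 2) ℝ))
        < 3 * Real.sqrt 2 * ε / (1 - δ) := by
  intro j k l hjkl
  obtain ⟨b, hb⟩ := hjkl
  have hjk : (U j ∩ U k).Nonempty := ⟨b, hb.1⟩
  have hkl : (U k ∩ U l).Nonempty := ⟨b, hb.1.2, hb.2⟩
  have hjl : (U j ∩ U l).Nonempty := ⟨b, hb.1.1, hb.2⟩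
  have h1δ : 0 < 1 - δ := by linarith
  set K : ℝ := 3 * ε / (1 - δ) with hK
  have hKpos : 0 < K := by positivity
  set A : Matrix (Fin 2) (Fin 2) ℝ :=
    (Ω j k : Matrix (Fin 2) (Fin 2) ℝ) * (Ω k l : Matrix (Fin 2) (Fin 2) ℝ)
      - (Ω j l : Matrix (Fin 2) (Fin 2) ℝ) with hA
  set T : EuclideanSpace ℝ (Fin 2) →L[ℝ] EuclideanSpace ℝ (Fin 2) :=
    Matrix.toEuclideanCLM (𝕜 := ℝ) A with hT
  set S : Set (EuclideanSpace ℝ (Fin 2)) := f l '' (π ⁻¹' (U j ∩ U k ∩ U l)) with hS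
  -- Step 1: `‖T v‖ < 3 ε` on `S`.
  have step1 : ∀ v ∈ S, ‖T v‖ < 3 * ε := by
    rintro v ⟨x, hx, rfl⟩
    have e1 := hΩ j k hjk x ⟨hx.1.1, hx.1.2⟩
    have e2 := hΩ k l hkl x ⟨hx.1.2, hx.2⟩
    have e3 := hΩ j l hjl x ⟨hx.1.1, hx.2⟩
    rw [← aux_coe] at e1 e2 e3
    have hTv : T (f l x) =
        Matrix.toEuclideanCLM (𝕜 := ℝ) ((Ω j k : Matrix (Fin 2) (Fin 2) ℝ))
          (Matrix.toEuclideanCLM (𝕜 := ℝ) ((Ω k l : Matrix (Fin 2) (Fin 2) ℝ)) (f l x) - f k x)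
        + (Matrix.toEuclideanCLM (𝕜 := ℝ) ((Ω j k : Matrix (Fin 2) (Fin 2) ℝ)) (f k x) - f j x)
        + (f j x - Matrix.toEuclideanCLM (𝕜 := ℝ) ((Ω j l : Matrix (Fin 2) (Fin 2) ℝ)) (f l x)) := by
      rw [hT, hA]
      simp only [map_sub, _root_.map_mul, ContinuousLinearMap.sub_apply,
        ContinuousLinearMap.mul_apply, map_sub]
      abel
    rw [hTv]
    have n1 : ‖Matrix.toEuclideanCLM (𝕜 := ℝ) ((Ω j k : Matrix (Fin 2) (Fin 2) ℝ))
        (Matrix.toEuclideanCLM (𝕜 := ℝ) ((Ω k l : Matrix (Fin 2) (Fin 2) ℝ)) (f l x) - f k x)‖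
        < ε := by
      rw [aux_norm_map, norm_sub_rev]; exact e2
    have n2 : ‖Matrix.toEuclideanCLM (𝕜 := ℝ) ((Ω j k : Matrix (Fin 2) (Fin 2) ℝ)) (f k x)
        - f j x‖ < ε := by rw [norm_sub_rev]; exact e1
    have n3 := e3
    calc _ ≤ _ := norm_add₃_le
      _ < 3 * ε := by linarith
  -- Step 2: every unit vector is `δ`-close to `S`.
  have near : ∀ u : EuclideanSpace ℝ (Fin 2), ‖u‖ = 1 → ∃ v ∈ S, ‖u - v‖ < δ := by
    intro u hu
    have humem : u ∈ Metric.sphere (0 : EuclideanSpace ℝ (Fin 2)) 1 := by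
      simpa [mem_sphere_zero_iff_norm] using hu
    have h2 := hH j k l ⟨b, hb⟩
    change Metric.hausdorffEDist _ _ < _ at h2
    rw [EMetric.hausdorffEdist_comm] at h2
    have h1 : EMetric.infEdist u S < ENNReal.ofReal δ :=
      lt_of_le_of_lt (EMetric.infEdist_le_hausdorffEdist_of_mem humem) h2
    obtain ⟨v, hv, hdv⟩ := EMetric.infEdist_lt_iff.mp h1
    exact ⟨v, hv, by rwa [← dist_eq_norm, ← edist_lt_ofReal]⟩
  -- Step 3: `‖T‖ ≤ K`.
  have hTnorm : ‖T‖ ≤ K := by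
    have hb' : ‖T‖ ≤ 3 * ε + δ * ‖T‖ := by
      refine T.opNorm_le_bound ?_ ?_
      · have : 0 ≤ δ * ‖T‖ := mul_nonneg hδ0 (norm_nonneg T)
        linarith
      intro v
      rcases eq_or_ne v 0 with rfl | hv
      · simp
      · have hnv : ‖v‖ ≠ 0 := norm_ne_zero_iff.mpr hv
        set u := ‖v‖⁻¹ • v with hu
        have hu1 : ‖u‖ = 1 := by
          rw [hu, norm_smul, Real.norm_eq_abs, abs_of_nonneg (inv_nonneg.mpr (norm_nonneg v)),
            inv_mul_cancel₀ hnv]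
        obtain ⟨w, hw, hdw⟩ := near u hu1
        have hTu : ‖T u‖ ≤ 3 * ε + δ * ‖T‖ := by
          have hsplit : T u = T w + T (u - w) := by rw [map_sub]; abel
          have g1 : ‖T w‖ < 3 * ε := step1 w hw
          have g2 : ‖T (u - w)‖ ≤ ‖T‖ * ‖u - w‖ := T.le_opNorm _
          have g3 : ‖T‖ * ‖u - w‖ ≤ ‖T‖ * δ :=
            mul_le_mul_of_nonneg_left hdw.le (norm_nonneg T)
          calc ‖T u‖ = ‖T w + T (u - w)‖ := by rw [hsplit]
            _ ≤ ‖T w‖ + ‖T (u - w)‖ := norm_add_le _ _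
            _ ≤ 3 * ε + δ * ‖T‖ := by nlinarith
        have hveq : v = ‖v‖ • u := by
          rw [hu, smul_smul, mul_inv_cancel₀ hnv, one_smul]
        have hTv2 : T v = ‖v‖ • T u := by
          conv_lhs => rw [hveq]
          exact map_smul T _ _
        calc ‖T v‖ = ‖v‖ * ‖T u‖ := by
              rw [hTv2, norm_smul, Real.norm_eq_abs, abs_of_nonneg (norm_nonneg v)]
          _ ≤ ‖v‖ * (3 * ε + δ * ‖T‖) := by
              exact mul_le_mul_of_nonneg_left hTu (norm_nonneg v)
          _ = (3 * ε + δ * ‖T‖) * ‖v‖ := by ring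
    rw [hK, le_div_iff₀ h1δ]
    nlinarith [norm_nonneg T]
  -- Step 4: strict bound on unit vectors.
  have step4 : ∀ u : EuclideanSpace ℝ (Fin 2), ‖u‖ = 1 → ‖T u‖ < K := by
    intro u hu1
    obtain ⟨w, hw, hdw⟩ := near u hu1
    have hsplit : T u = T w + T (u - w) := by rw [map_sub]; abel
    have g1 : ‖T w‖ < 3 * ε := step1 w hw
    have g2 : ‖T (u - w)‖ ≤ ‖T‖ * ‖u - w‖ := T.le_opNorm _
    have g3 : ‖T‖ * ‖u - w‖ ≤ K * δ :=
      mul_le_mul hTnorm hdw.le (norm_nonneg _) hKpos.le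
    have key : 3 * ε + K * δ = K := by
      rw [hK]; field_simp; ring
    calc ‖T u‖ = ‖T w + T (u - w)‖ := by rw [hsplit]
      _ ≤ ‖T w‖ + ‖T (u - w)‖ := norm_add_le _ _
      _ < K := by linarith
  -- Step 5: column bounds.
  have col : ∀ jj : Fin 2, ∑ i, (A i jj) ^ 2 < K ^ 2 := by
    intro jj
    have he : ‖(EuclideanSpace.single jj (1 : ℝ) : EuclideanSpace ℝ (Fin 2))‖ = 1 := by
      simp [EuclideanSpace.norm_single]
    have h5 := step4 _ he
    have hcomp : ‖T (EuclideanSpace.single jj (1 : ℝ))‖ = Real.sqrt (∑ i, (A i jj) ^ 2) := by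
      rw [hT, EuclideanSpace.norm_eq]
      congr 1
      refine Finset.sum_congr rfl fun i _ => ?_
      rw [aux_apply]
      simp [EuclideanSpace.single_apply, mul_ite, Real.norm_eq_abs, sq_abs]
    rw [hcomp] at h5
    exact Real.lt_sq_of_sqrt_lt h5
  -- Conclusion.
  have target_eq : 3 * Real.sqrt 2 * ε / (1 - δ) = Real.sqrt 2 * K := by
    rw [hK]; ring
  rw [target_eq]
  unfold frobeniusNorm
  have hbig : ∑ i, ∑ jj, (A i jj) ^ 2 < (Real.sqrt 2 * K) ^ 2 := by
    have c0 := col 0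
    have c1 := col 1
    rw [mul_pow, Real.sq_sqrt (by norm_num : (0:ℝ) ≤ 2)]
    simp only [Fin.sum_univ_two] at c0 c1 ⊢
    linarith
  exact (Real.sqrt_lt' (by positivity)).mpr hbig
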